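/- arXiv:1705.10116 — 7 statements merged into one kernel-verified Lean document; each statement's English description precedes it below -/
import Mathlib

section
/- The strict core of the simple symmetric fractional hedonic game represented by the cycle C_5 on five vertices is empty: for the 5-cycle graph, every partition of the vertex set admits a weakly blocking coalition. -/
open Finset
open scoped Classical

variable {V : Type*} [Fintype V] [DecidableEq V]

/-- The utility of player `i` in coalition `S` in the simple symmetric fractional
hedonic game given by the graph `G`: the number of neighbors of `i` in `S`
divided by the size of `S`. -/
noncomputable def util (G : SimpleGraph V) (i : V) (S : Finset V) : ℚ :=
  ((S.filter fun j => G.Adj i j).card : ℚ) / (S.card : ℚ)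

/-- A partition of the player set `V`, given by the block `part i` of each player `i`. -/
structure PlayerPartition (V : Type*) [Fintype V] [DecidableEq V] where
  part : V → Finset V
  mem_part : ∀ i, i ∈ part i
  part_eq : ∀ i j, j ∈ part i → part j = part i

/-- A nonempty coalition `S` blocks `π` if every member is strictly better off in `S`. -/
def Blocks (G : SimpleGraph V) (π : PlayerPartition V) (S : Finset V) : Prop :=
  S.Nonempty ∧ ∀ i ∈ S, util G i (π.part i) < util G i S

/-- A partition is in the core if no nonempty coalition blocks it. -/
def InCore (G : SimpleGraph V) (π : PlayerPartition V) : Prop :=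
  ∀ S : Finset V, ¬ Blocks G π S

/-- A nonempty coalition `S` weakly blocks `π` if every member is weakly better off
in `S` and some member is strictly better off. -/
def WeaklyBlocks (G : SimpleGraph V) (π : PlayerPartition V) (S : Finset V) : Prop :=
  S.Nonempty ∧ (∀ i ∈ S, util G i (π.part i) ≤ util G i S) ∧
    ∃ j ∈ S, util G j (π.part j) < util G j S

/-- A partition is in the strict core if no nonempty coalition weakly blocks it. -/
def InStrictCore (G : SimpleGraph V) (π : PlayerPartition V) : Prop :=
  ∀ S : Finset V, ¬ WeaklyBlocks G π S

/-- The cycle `C₅` on the vertices `{0,1,2,3,4}`, with edges `{i, i+1 mod 5}`. -/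
def C5 : SimpleGraph (Fin 5) := SimpleGraph.fromRel (fun i j => j = i + 1)


def deg5 (i : Fin 5) (S : Finset (Fin 5)) : ℕ :=
  (S.filter fun j => i ≠ j ∧ (j = i + 1 ∨ i = j + 1)).card

def OK (c : Fin 5 → Fin 5) : Prop :=
    ∃ S : Finset (Fin 5), S.Nonempty ∧
      (∀ i ∈ S, deg5 i (univ.filter fun j => c j = c i) * S.card
        ≤ deg5 i S * (univ.filter fun j => c j = c i).card) ∧
      ∃ j ∈ S, deg5 j (univ.filter fun j' => c j' = c j) * S.card
        < deg5 j S * (univ.filter fun j' => c j' = c j).card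

instance : DecidablePred OK := fun c => by unfold OK; infer_instance

set_option maxRecDepth 100000 in
set_option maxHeartbeats 4000000 in
theorem key5 : ∀ a b c d e : Fin 5,
    (∀ i, (![a,b,c,d,e] : Fin 5 → Fin 5) ((![a,b,c,d,e] : Fin 5 → Fin 5) i) = ![a,b,c,d,e] i
      ∧ (![a,b,c,d,e] : Fin 5 → Fin 5) i ≤ i) →
    OK ![a,b,c,d,e] := by decide

lemma filter_adj_eq (i : Fin 5) (S : Finset (Fin 5)) :
    (S.filter fun j => C5.Adj i j) = S.filter fun j => i ≠ j ∧ (j = i + 1 ∨ i = j + 1) := by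
  apply Finset.filter_congr
  intro j _
  simp [C5, SimpleGraph.fromRel_adj]

lemma util_eq5 (i : Fin 5) (S : Finset (Fin 5)) :
    util C5 i S = (deg5 i S : ℚ) / (S.card : ℚ) := by
  unfold util deg5
  rw [filter_adj_eq]

lemma util_le_iff5 (i : Fin 5) {S T : Finset (Fin 5)} (hS : S.Nonempty) (hT : T.Nonempty) :
    util C5 i T ≤ util C5 i S ↔ deg5 i T * S.card ≤ deg5 i S * T.card := by
  rw [util_eq5, util_eq5,
    div_le_div_iff₀ (by exact_mod_cast Finset.card_pos.mpr hT)
      (by exact_mod_cast Finset.card_pos.mpr hS)]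
  exact_mod_cast Iff.rfl

lemma util_lt_iff5 (i : Fin 5) {S T : Finset (Fin 5)} (hS : S.Nonempty) (hT : T.Nonempty) :
    util C5 i T < util C5 i S ↔ deg5 i T * S.card < deg5 i S * T.card := by
  rw [util_eq5, util_eq5,
    div_lt_div_iff₀ (by exact_mod_cast Finset.card_pos.mpr hT)
      (by exact_mod_cast Finset.card_pos.mpr hS)]
  exact_mod_cast Iff.rfl

/-- The strict core of the simple symmetric fractional hedonic game given by the
5-cycle is empty: every partition admits a weakly blocking coalition. -/
theorem stmt_1 (π : PlayerPartition (Fin 5)) :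
    ∃ S : Finset (Fin 5), WeaklyBlocks C5 π S := by
  set c : Fin 5 → Fin 5 := fun i => (π.part i).min' ⟨i, π.mem_part i⟩ with hc
  have hmem : ∀ i, c i ∈ π.part i := fun i => Finset.min'_mem _ _
  have hpartc : ∀ i, π.part (c i) = π.part i := fun i => π.part_eq i (c i) (hmem i)
  have hguard : ∀ i, c (c i) = c i ∧ c i ≤ i := by
    intro i
    constructor
    · simp only [hc]
      congr 1
      exact hpartc i
    · exact Finset.min'_le _ i (π.mem_part i)
  have hB : ∀ i, π.part i = univ.filter fun j => c j = c i := by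
    intro i
    ext j
    simp only [Finset.mem_filter, Finset.mem_univ, true_and]
    constructor
    · intro hj
      have := π.part_eq i j hj
      simp only [hc]
      congr 1
    · intro hj
      have h1 : c j ∈ π.part j := hmem j
      have h2 : c j ∈ π.part i := hj ▸ hmem i
      have := (π.part_eq j (c j) h1).symm.trans (π.part_eq i (c j) h2)
      exact this ▸ π.mem_part j
  have hext : (![c 0, c 1, c 2, c 3, c 4] : Fin 5 → Fin 5) = c := by
    funext i
    fin_cases i <;> rfl
  have hok : OK c := by
    rw [← hext]
    exact key5 (c 0) (c 1) (c 2) (c 3) (c 4) (by rw [hext]; exact hguard)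
  obtain ⟨S, hSne, hle, j, hjS, hlt⟩ := hok
  refine ⟨S, hSne, ?_, j, hjS, ?_⟩
  · intro i hi
    rw [util_le_iff5 i hSne ⟨i, π.mem_part i⟩, hB i]
    exact hle i hi
  · rw [util_lt_iff5 j hSne ⟨j, π.mem_part j⟩, hB j]
    exact hlt
end

section
/- The symmetric fractional hedonic game on the player set N = {1,…,6} with symmetric valuations given by v(1,2) = 7, v(1,3) = 5, v(2,3) = 6, v(3,4) = 7, v(3,5) = 5, v(4,5) = 6, v(5,6) = 7, v(5,1) = 5, v(6,1) = 6, v_i(i) = 0, and v(i,j) = −24 for all other unordered pairs {i,j}, has an empty core: every partition of N admits a blocking coalition. -/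
set_option maxHeartbeats 4000000
set_option maxRecDepth 10000

open Finset

/-- A partition of the player set `N`, given by the block `part i` of each player `i`. -/
structure FHGPartition (N : Type*) [Fintype N] [DecidableEq N] where
  part : N → Finset N
  mem_part : ∀ i, i ∈ part i
  part_eq : ∀ i j, j ∈ part i → part j = part i

/-- The utility of player `i` in coalition `S` in the fractional hedonic game with
valuation functions `v`: the sum of `i`'s valuations of the members of `S`,
divided by the size of `S`. -/
noncomputable def wutil {N : Type*} [Fintype N] [DecidableEq N]
    (v : N → N → ℝ) (i : N) (S : Finset N) : ℝ :=
  (∑ j ∈ S, v i j) / (S.card : ℝ)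

/-- The symmetric valuations of the 6-player game (players `0,…,5` standing for
`1,…,6`): `v 0 1 = 7`, `v 0 2 = 5`, `v 1 2 = 6`, `v 2 3 = 7`, `v 2 4 = 5`,
`v 3 4 = 6`, `v 4 5 = 7`, `v 4 0 = 5`, `v 5 0 = 6`, `v i i = 0`, and `-24`
for all remaining pairs. -/
noncomputable def v3 : Fin 6 → Fin 6 → ℝ :=
  ![![0, 7, 5, -24, 5, 6],
    ![7, 0, 6, -24, -24, -24],
    ![5, 6, 0, 7, 5, -24],
    ![-24, -24, 7, 0, 6, -24],
    ![5, -24, 5, 6, 0, 7],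
    ![6, -24, -24, -24, 7, 0]]

/-! ### Auxiliary computational machinery -/

/-- Integer version of the valuations. -/
def vzt : Fin 6 → Fin 6 → ℤ :=
  ![![0, 7, 5, -24, 5, 6],
    ![7, 0, 6, -24, -24, -24],
    ![5, 6, 0, 7, 5, -24],
    ![-24, -24, 7, 0, 6, -24],
    ![5, -24, 5, 6, 0, 7],
    ![6, -24, -24, -24, 7, 0]]

def allFin : List (Fin 6) := [0,1,2,3,4,5]

def sumL (i : Fin 6) (l : List (Fin 6)) : ℤ := (l.map (vzt i)).sum

/-- Candidate blocking coalitions. -/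
def candsL : List (List (Fin 6)) :=
  [[0],[1],[2],[3],[4],[5],[0,1],[1,2],[3,4],[0,1,2],[2,3,4],[0,4,5]]

/-- Check that some candidate coalition blocks the partition given by the fibers of `c`. -/
def checkc (c : Fin 6 → Fin 6) : Bool :=
  candsL.any fun S =>
    S.all fun i =>
      let B := allFin.filter (fun j => c j == c i)
      sumL i B * S.length < sumL i S * B.length

def checkAll : Bool :=
  [(0:Fin 6)].all fun a => ([0,1] : List (Fin 6)).all fun b =>
  ([0,1,2] : List (Fin 6)).all fun c => ([0,1,2,3] : List (Fin 6)).all fun d =>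
  ([0,1,2,3,4] : List (Fin 6)).all fun e => allFin.all fun f =>
    checkc ![a,b,c,d,e,f]

lemma checkAll_true : checkAll = true := by decide

lemma mem_le (k : Fin 6) (l : List (Fin 6)) (hl : ∀ x : Fin 6, x ≤ k → x ∈ l)
    (x : Fin 6) (h : x ≤ k) : x ∈ l := hl x h

lemma checkc_true (c : Fin 6 → Fin 6) (hc : ∀ i, c i ≤ i) : checkc c = true := by
  have h := checkAll_true
  unfold checkAll at h
  simp only [List.all_eq_true] at h
  have h0 : c 0 ∈ ([0] : List (Fin 6)) := by
    have aux : ∀ x : Fin 6, x ≤ 0 → x ∈ ([0] : List (Fin 6)) := by decide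
    exact aux _ (hc 0)
  have h1 : c 1 ∈ ([0,1] : List (Fin 6)) := by
    have aux : ∀ x : Fin 6, x ≤ 1 → x ∈ ([0,1] : List (Fin 6)) := by decide
    exact aux _ (hc 1)
  have h2 : c 2 ∈ ([0,1,2] : List (Fin 6)) := by
    have aux : ∀ x : Fin 6, x ≤ 2 → x ∈ ([0,1,2] : List (Fin 6)) := by decide
    exact aux _ (hc 2)
  have h3 : c 3 ∈ ([0,1,2,3] : List (Fin 6)) := by
    have aux : ∀ x : Fin 6, x ≤ 3 → x ∈ ([0,1,2,3] : List (Fin 6)) := by decide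
    exact aux _ (hc 3)
  have h4 : c 4 ∈ ([0,1,2,3,4] : List (Fin 6)) := by
    have aux : ∀ x : Fin 6, x ≤ 4 → x ∈ ([0,1,2,3,4] : List (Fin 6)) := by decide
    exact aux _ (hc 4)
  have h5 : c 5 ∈ allFin := by
    have aux : ∀ x : Fin 6, x ∈ allFin := by decide
    exact aux _
  have := h _ h0 _ h1 _ h2 _ h3 _ h4 _ h5
  have he : ![c 0, c 1, c 2, c 3, c 4, c 5] = c := by
    funext i; fin_cases i <;> rfl
  rwa [he] at this

lemma v3_cast (i j : Fin 6) : v3 i j = (vzt i j : ℝ) := by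
  fin_cases i <;> fin_cases j <;> norm_num [v3, vzt]

lemma ineq_bridge (i : Fin 6) (P T : Finset (Fin 6)) (hP : P.Nonempty) (hT : T.Nonempty)
    (h : (∑ j ∈ P, vzt i j) * T.card < (∑ j ∈ T, vzt i j) * P.card) :
    wutil v3 i P < wutil v3 i T := by
  have hPc : (0 : ℝ) < P.card := by exact_mod_cast hP.card_pos
  have hTc : (0 : ℝ) < T.card := by exact_mod_cast hT.card_pos
  unfold wutil
  rw [div_lt_div_iff₀ hPc hTc]
  have eP : ∑ j ∈ P, v3 i j = ((∑ j ∈ P, vzt i j : ℤ) : ℝ) := by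
    push_cast; exact Finset.sum_congr rfl fun j _ => v3_cast i j
  have eT : ∑ j ∈ T, v3 i j = ((∑ j ∈ T, vzt i j : ℤ) : ℝ) := by
    push_cast; exact Finset.sum_congr rfl fun j _ => v3_cast i j
  rw [eP, eT]
  exact_mod_cast h

/-- The symmetric fractional hedonic game with valuations `v3` has an empty core:
every partition of the players admits a blocking coalition. -/
theorem stmt_3 (π : FHGPartition (Fin 6)) :
    ∃ S : Finset (Fin 6), S.Nonempty ∧
      ∀ i ∈ S, wutil v3 i (π.part i) < wutil v3 i S := by
  set c : Fin 6 → Fin 6 := fun i => (π.part i).min' ⟨i, π.mem_part i⟩ with hc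
  have hcm : ∀ i, c i ∈ π.part i := fun i => Finset.min'_mem _ _
  have hcle : ∀ i, c i ≤ i := fun i => Finset.min'_le _ i (π.mem_part i)
  have hfib : ∀ i j, c j = c i ↔ j ∈ π.part i := by
    intro i j
    constructor
    · intro hij
      have hji : π.part (c j) = π.part j := π.part_eq _ _ (hcm j)
      have hii : π.part (c i) = π.part i := π.part_eq _ _ (hcm i)
      rw [hij] at hji
      rw [hii] at hji
      exact hji ▸ π.mem_part j
    · intro hj
      have : π.part j = π.part i := π.part_eq _ _ hj
      simp only [hc, this]
  have hcheck := checkc_true c hcle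
  unfold checkc at hcheck
  rw [List.any_eq_true] at hcheck
  obtain ⟨S, hS, hSall⟩ := hcheck
  rw [List.all_eq_true] at hSall
  have hnd : S.Nodup := by
    fin_cases hS <;> decide
  have hne : S ≠ [] := by
    fin_cases hS <;> decide
  refine ⟨S.toFinset, ?_, ?_⟩
  · match S, hne with
    | a :: t, _ => exact ⟨a, by simp⟩
  · intro i hi
    rw [List.mem_toFinset] at hi
    have h := of_decide_eq_true (hSall i hi)
    set B := allFin.filter (fun j => c j == c i) with hB
    have hBnd : B.Nodup := by
      apply List.Nodup.filter
      decide
    have hBpart : B.toFinset = π.part i := by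
      ext j
      simp only [hB, List.mem_toFinset, List.mem_filter, beq_iff_eq]
      constructor
      · rintro ⟨-, hj⟩; exact (hfib i j).mp hj
      · intro hj; exact ⟨by fin_cases j <;> decide, (hfib i j).mpr hj⟩
    apply ineq_bridge i _ _ ⟨i, π.mem_part i⟩ ⟨i, List.mem_toFinset.mpr hi⟩
    rw [← hBpart]
    rw [List.sum_toFinset _ hBnd, List.sum_toFinset _ hnd,
      List.toFinset_card_of_nodup hBnd, List.toFinset_card_of_nodup hnd]
    exact h
end

section
/- For every simple symmetric fractional hedonic game represented by a finite simple graph in which every vertex has degree at most 2, the core is non-empty: there exists a partition of the vertex set that no coalition blocks. -/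
open Finset
open scoped Classical

variable {V : Type*} [Fintype V] [DecidableEq V]

section Aux

variable (G : SimpleGraph V)

/-- A triangle coalition: three pairwise adjacent vertices. -/
def IsTri (t : Finset V) : Prop :=
  t.card = 3 ∧ ∀ a ∈ t, ∀ b ∈ t, a ≠ b → G.Adj a b

/-- The set of vertices lying in some triangle. -/
noncomputable def triSet : Finset V :=
  univ.filter fun v => ∃ t : Finset V, IsTri G t ∧ v ∈ t

/-- A matching avoiding all triangle vertices. -/
def IsMatch (M : Finset (Finset V)) : Prop :=
  (∀ e ∈ M, ∃ a b : V, G.Adj a b ∧ e = {a, b} ∧ a ∉ triSet G ∧ b ∉ triSet G) ∧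
    ∀ e ∈ M, ∀ f ∈ M, e ≠ f → Disjoint e f

/-- The partition: triangles, then matching edges, then singletons. -/
noncomputable def thePart (M : Finset (Finset V)) (i : V) : Finset V :=
  if i ∈ triSet G then insert i (univ.filter fun w => G.Adj i w)
  else if h : ∃ e ∈ M, i ∈ e then h.choose else {i}

variable {G}

lemma num_le_two (hdeg : ∀ v : V, (univ.filter fun w => G.Adj v w).card ≤ 2)
    (i : V) (S : Finset V) : (S.filter fun j => G.Adj i j).card ≤ 2 :=
  le_trans (card_le_card (filter_subset_filter _ (subset_univ S))) (hdeg i)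

lemma num_lt {i : V} {S : Finset V} (hi : i ∈ S) :
    (S.filter fun j => G.Adj i j).card + 1 ≤ S.card := by
  have hsub : (S.filter fun j => G.Adj i j) ⊆ S.erase i := by
    intro x hx
    simp only [mem_filter] at hx
    exact mem_erase.2 ⟨hx.2.ne', hx.1⟩
  have h := card_le_card hsub
  rw [card_erase_of_mem hi] at h
  have h1 : 1 ≤ S.card := card_pos.2 ⟨i, hi⟩
  omega

lemma tri_eq (hdeg : ∀ v : V, (univ.filter fun w => G.Adj v w).card ≤ 2)
    {t : Finset V} {i : V} (ht : IsTri G t) (hi : i ∈ t) :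
    t = insert i (univ.filter fun w => G.Adj i w) := by
  have hsub : t.erase i ⊆ univ.filter fun w => G.Adj i w := by
    intro b hb
    simp only [mem_erase] at hb
    simp only [mem_filter, mem_univ, true_and]
    exact ht.2 i hi b hb.2 (Ne.symm hb.1)
  have hcard : (t.erase i).card = 2 := by rw [card_erase_of_mem hi, ht.1]
  have heq : t.erase i = univ.filter fun w => G.Adj i w :=
    eq_of_subset_of_card_le hsub (by rw [hcard]; exact hdeg i)
  rw [← heq, insert_erase hi]

lemma util_singleton (i : V) : util G i {i} = 0 := by
  simp [util, filter_singleton]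

lemma util_pair {a b : V} (h : G.Adj a b) : util G a {a, b} = 1 / 2 := by
  have hne : a ≠ b := h.ne
  have hfil : ({a, b} : Finset V).filter (fun j => G.Adj a j) = {b} := by
    ext x
    simp only [mem_filter, mem_insert, mem_singleton]
    constructor
    · rintro ⟨hx | hx, hadj⟩
      · exact absurd (hx ▸ hadj) (G.irrefl)
      · exact hx
    · rintro rfl
      exact ⟨Or.inr rfl, h⟩
  rw [util, hfil, card_singleton, card_insert_of_notMem (by simp [hne]), card_singleton]
  norm_num

lemma util_tri {t : Finset V} {i : V} (ht : IsTri G t) (hi : i ∈ t) :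
    util G i t = 2 / 3 := by
  have hfil : t.filter (fun j => G.Adj i j) = t.erase i := by
    ext x
    simp only [mem_filter, mem_erase]
    constructor
    · rintro ⟨hx, hadj⟩; exact ⟨hadj.ne', hx⟩
    · rintro ⟨hne, hx⟩; exact ⟨hx, ht.2 i hi x hx (Ne.symm hne)⟩
  rw [util, hfil, card_erase_of_mem hi, ht.1]
  norm_num

lemma arith_tri {k n : ℕ} (hk : k ≤ 2) (hkn : k + 1 ≤ n) :
    ¬ ((2 : ℚ) / 3 < (k : ℚ) / (n : ℚ)) := by
  intro h
  have hn : (0 : ℚ) < (n : ℚ) := by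
    have : 1 ≤ n := by omega
    exact_mod_cast Nat.lt_of_lt_of_le Nat.zero_lt_one this
  rw [div_lt_div_iff₀ (by norm_num) hn] at h
  have : 2 * n < k * 3 := by exact_mod_cast h
  omega

lemma arith_half {k n : ℕ} (hk : k ≤ 2) (hkn : k + 1 ≤ n)
    (h : (1 : ℚ) / 2 < (k : ℚ) / (n : ℚ)) : n = 3 ∧ k = 2 := by
  have hn : (0 : ℚ) < (n : ℚ) := by
    have : 1 ≤ n := by omega
    exact_mod_cast Nat.lt_of_lt_of_le Nat.zero_lt_one this
  rw [div_lt_div_iff₀ (by norm_num) hn] at h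
  have : 1 * n < k * 2 := by exact_mod_cast h
  omega

/-- Key step: a member strictly improving on `1/2` in `S` forces `|S| = 3`, with
that member adjacent to everything else in `S`, and all its neighbors in `S`. -/
lemma step (hdeg : ∀ v : V, (univ.filter fun w => G.Adj v w).card ≤ 2)
    {S : Finset V} {i : V} (hi : i ∈ S) (h : (1 : ℚ) / 2 < util G i S) :
    S.card = 3 ∧ (∀ b ∈ S, b ≠ i → G.Adj i b) ∧ ∀ j : V, G.Adj i j → j ∈ S := by
  obtain ⟨hn3, hk2⟩ := arith_half (num_le_two hdeg i S) (num_lt hi) h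
  have hsub : (S.filter fun j => G.Adj i j) ⊆ S.erase i := by
    intro x hx
    simp only [mem_filter] at hx
    exact mem_erase.2 ⟨hx.2.ne', hx.1⟩
  have herase : (S.filter fun j => G.Adj i j) = S.erase i := by
    apply eq_of_subset_of_card_le hsub
    rw [card_erase_of_mem hi, hn3, hk2]
  have hNsub : (S.filter fun j => G.Adj i j) ⊆ univ.filter fun w => G.Adj i w :=
    filter_subset_filter _ (subset_univ S)
  have hNeq : (S.filter fun j => G.Adj i j) = univ.filter fun w => G.Adj i w := by
    apply eq_of_subset_of_card_le hNsub
    rw [hk2]; exact hdeg i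
  refine ⟨hn3, ?_, ?_⟩
  · intro b hb hbne
    have : b ∈ S.erase i := mem_erase.2 ⟨hbne, hb⟩
    rw [← herase] at this
    exact (mem_filter.1 this).2
  · intro j hj
    have : j ∈ univ.filter fun w => G.Adj i w := mem_filter.2 ⟨mem_univ _, hj⟩
    rw [← hNeq] at this
    exact (mem_filter.1 this).1

lemma edge_util {M : Finset (Finset V)} (hM : IsMatch G M) {e : Finset V}
    (he : e ∈ M) {i : V} (hi : i ∈ e) :
    util G i e = 1 / 2 ∧ ∃ j ∈ e, G.Adj i j ∧ i ∉ triSet G := by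
  obtain ⟨a, b, hab, hEeq, haT, hbT⟩ := hM.1 e he
  subst hEeq
  rcases mem_insert.1 hi with rfl | hi
  · exact ⟨util_pair hab, b, by simp, hab, haT⟩
  · rw [mem_singleton] at hi
    subst hi
    rw [Finset.pair_comm]
    exact ⟨util_pair hab.symm, a, by simp, hab.symm, hbT⟩

end Aux

/-- For every simple symmetric fractional hedonic game represented by a finite
simple graph in which every vertex has degree at most 2, the core is non-empty. -/
theorem stmt_4 (G : SimpleGraph V) (hdeg : ∀ v : V, (univ.filter fun w => G.Adj v w).card ≤ 2) :
    ∃ π : PlayerPartition V, InCore G π := by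
  classical
  -- a maximum matching avoiding triangle vertices
  obtain ⟨M, hM, hMmax⟩ : ∃ M, IsMatch G M ∧ ∀ M', IsMatch G M' → M'.card ≤ M.card := by
    obtain ⟨M, hM1, hM2⟩ := Finset.exists_max_image
      (univ.filter fun M : Finset (Finset V) => IsMatch G M) Finset.card
      ⟨∅, mem_filter.2 ⟨mem_univ _, ⟨fun e he => absurd he (notMem_empty e),
        fun e he => absurd he (notMem_empty e)⟩⟩⟩
    exact ⟨M, (mem_filter.1 hM1).2, fun M' h' => hM2 M' (mem_filter.2 ⟨mem_univ _, h'⟩)⟩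
  -- basic facts
  have htriP : ∀ i ∈ triSet G, IsTri G (insert i (univ.filter fun w => G.Adj i w)) := by
    intro i hi
    obtain ⟨t, ht, hit⟩ := (mem_filter.1 hi).2
    rwa [← tri_eq hdeg ht hit]
  have hmem_notT : ∀ e ∈ M, ∀ j ∈ e, j ∉ triSet G := by
    intro e he j hj
    obtain ⟨a, b, hab, hEeq, haT, hbT⟩ := hM.1 e he
    subst hEeq
    rcases mem_insert.1 hj with rfl | hj
    · exact haT
    · rw [mem_singleton] at hj; subst hj; exact hbT
  have hpart_tri : ∀ i ∈ triSet G,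
      thePart G M i = insert i (univ.filter fun w => G.Adj i w) := by
    intro i hi; rw [thePart, if_pos hi]
  have hpart_match : ∀ i ∉ triSet G, ∀ (h : ∃ e ∈ M, i ∈ e),
      thePart G M i ∈ M ∧ i ∈ thePart G M i := by
    intro i hi h
    rw [thePart, if_neg hi, dif_pos h]
    exact ⟨h.choose_spec.1, h.choose_spec.2⟩
  have hpart_single : ∀ i ∉ triSet G, ¬ (∃ e ∈ M, i ∈ e) → thePart G M i = {i} := by
    intro i hi h
    rw [thePart, if_neg hi, dif_neg h]
  have hpart_eq_edge : ∀ i ∉ triSet G, ∀ e ∈ M, i ∈ e → thePart G M i = e := by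
    intro i hi e he hie
    have h : ∃ e ∈ M, i ∈ e := ⟨e, he, hie⟩
    obtain ⟨hPM, hiP⟩ := hpart_match i hi h
    by_contra hne
    exact (Finset.disjoint_left.1 (hM.2 _ hPM _ he hne) hiP) hie
  -- the partition
  refine ⟨⟨thePart G M, ?_, ?_⟩, ?_⟩
  · -- mem_part
    intro i
    by_cases hiT : i ∈ triSet G
    · rw [hpart_tri i hiT]; exact mem_insert_self _ _
    · by_cases hm : ∃ e ∈ M, i ∈ e
      · exact (hpart_match i hiT hm).2
      · rw [hpart_single i hiT hm]; exact mem_singleton_self i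
  · -- part_eq
    intro i j hj
    by_cases hiT : i ∈ triSet G
    · rw [hpart_tri i hiT] at hj ⊢
      have htri := htriP i hiT
      have hjT : j ∈ triSet G :=
        mem_filter.2 ⟨mem_univ _, ⟨_, htri, hj⟩⟩
      rw [hpart_tri j hjT, ← tri_eq hdeg htri hj]
    · by_cases hm : ∃ e ∈ M, i ∈ e
      · obtain ⟨hPM, _⟩ := hpart_match i hiT hm
        have hjT : j ∉ triSet G := hmem_notT _ hPM j hj
        exact hpart_eq_edge j hjT _ hPM hj
      · rw [hpart_single i hiT hm] at hj ⊢
        rw [mem_singleton] at hj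
        subst hj
        exact hpart_single _ hiT hm
  · -- in the core
    intro S hS
    obtain ⟨hSne, hblock⟩ := hS
    simp only at hblock
    -- no member of S lies in a triangle
    have hnotT : ∀ i ∈ S, i ∉ triSet G := by
      intro i hiS hiT
      have h2 := hblock i hiS
      rw [hpart_tri i hiT, util_tri (htriP i hiT) (mem_insert_self _ _)] at h2
      exact arith_tri (num_le_two hdeg i S) (num_lt hiS) h2
    -- no member of S is matched
    have hnotM : ∀ i ∈ S, ¬ (∃ e ∈ M, i ∈ e) := by
      intro i hiS hex
      have hiT := hnotT i hiS
      obtain ⟨e, he, hie⟩ := hex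
      have hPi : thePart G M i = e := hpart_eq_edge i hiT e he hie
      obtain ⟨hu_i, j, hje, hij, _⟩ := edge_util hM he hie
      have h2 := hblock i hiS
      rw [hPi, hu_i] at h2
      obtain ⟨hcard, hAdj_i, hNb_i⟩ := step hdeg hiS h2
      have hjS : j ∈ S := hNb_i j hij
      have hjT : j ∉ triSet G := hmem_notT e he j hje
      have hPj : thePart G M j = e := hpart_eq_edge j hjT e he hje
      obtain ⟨hu_j, _⟩ := edge_util hM he hje
      have h3 := hblock j hjS
      rw [hPj, hu_j] at h3
      obtain ⟨_, hAdj_j, _⟩ := step hdeg hjS h3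
      -- S is a triangle containing i, contradiction
      have hijne : i ≠ j := hij.ne
      have hStri : IsTri G S := by
        refine ⟨hcard, ?_⟩
        intro a ha b hb hab
        rcases eq_or_ne a i with rfl | hai
        · exact hAdj_i b hb (Ne.symm hab)
        rcases eq_or_ne a j with rfl | haj
        · exact hAdj_j b hb (Ne.symm hab)
        -- a is the third vertex; so b = i or b = j
        have hSeq : S = {i, j, a} := by
          apply (eq_of_subset_of_card_le ?_ ?_).symm
          · intro x hx
            rcases mem_insert.1 hx with rfl | hx
            · exact hiS
            rcases mem_insert.1 hx with rfl | hx
            · exact hjS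
            · rw [mem_singleton] at hx; subst hx; exact ha
          · rw [hcard]
            have : ({i, j, a} : Finset V).card = 3 := by
              rw [card_insert_of_notMem (by simp [hijne, hai.symm]),
                card_insert_of_notMem (by simp [haj.symm]), card_singleton]
            omega
        have hb' : b = i ∨ b = j := by
          rw [hSeq] at hb
          rcases mem_insert.1 hb with rfl | hb
          · exact Or.inl rfl
          rcases mem_insert.1 hb with rfl | hb
          · exact Or.inr rfl
          · rw [mem_singleton] at hb; exact absurd hb.symm hab
        rcases hb' with rfl | rfl
        · exact (hAdj_i a ha hai).symm
        · exact (hAdj_j a ha haj).symm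
      exact hiT (mem_filter.2 ⟨mem_univ _, S, hStri, hiS⟩)
    -- so every member is a singleton; find an edge inside S to extend M
    obtain ⟨i, hiS⟩ := hSne
    have hiT := hnotT i hiS
    have hiM := hnotM i hiS
    have h2 := hblock i hiS
    rw [hpart_single i hiT hiM, util_singleton] at h2
    have hkpos : 0 < (S.filter fun j => G.Adj i j).card := by
      by_contra hk
      have hk0 : (S.filter fun j => G.Adj i j).card = 0 := by omega
      rw [util, hk0] at h2
      norm_num at h2
    obtain ⟨j, hj⟩ := card_pos.1 hkpos
    have hjS : j ∈ S := (mem_filter.1 hj).1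
    have hij : G.Adj i j := (mem_filter.1 hj).2
    have hjT := hnotT j hjS
    have hjM := hnotM j hjS
    -- extend the matching
    have hnotmem : ({i, j} : Finset V) ∉ M := fun hmem => hiM ⟨_, hmem, by simp⟩
    have hM' : IsMatch G (insert {i, j} M) := by
      constructor
      · intro e he
        rcases mem_insert.1 he with rfl | he
        · exact ⟨i, j, hij, rfl, hiT, hjT⟩
        · exact hM.1 e he
      · intro e he f hf hef
        have key : ∀ g ∈ M, Disjoint ({i, j} : Finset V) g := by
          intro g hg
          rw [Finset.disjoint_left]
          intro x hx hxg
          rcases mem_insert.1 hx with rfl | hx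
          · exact hiM ⟨g, hg, hxg⟩
          · rw [mem_singleton] at hx; subst hx; exact hjM ⟨g, hg, hxg⟩
        rcases mem_insert.1 he with rfl | he
        · rcases mem_insert.1 hf with rfl | hf
          · exact absurd rfl hef
          · exact key f hf
        · rcases mem_insert.1 hf with rfl | hf
          · exact (key e he).symm
          · exact hM.2 e he f hf hef
    have := hMmax _ hM'
    rw [card_insert_of_notMem hnotmem] at this
    omega
end

section
/- In every Bakers and Millers game, the partition consisting of the grand coalition {N} is in the strict core. -/
open Finset
open scoped Classical

variable {V : Type*} [Fintype V] [DecidableEq V]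

/-- The complete multipartite graph of a Bakers and Millers game: the players `V`
are assigned types by `type : V → T`, and distinct players are adjacent iff they
have different types. -/
def bmGraph {V T : Type*} (type : V → T) : SimpleGraph V where
  Adj i j := type i ≠ type j
  symm := ⟨fun _ _ h => Ne.symm h⟩
  loopless := ⟨fun _ h => h rfl⟩

/-- In every Bakers and Millers game, the partition consisting of the grand
coalition is in the strict core. -/
theorem stmt_6 {T : Type*} (type : V → T) (htypes : Function.Surjective type) :
    InStrictCore (bmGraph type)
      ⟨fun _ => univ, fun i => mem_univ i, fun _ _ _ => rfl⟩ := by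
  rintro S ⟨hSne, hweak, j, hjS, hstrict⟩
  have hVne : Nonempty V := ⟨hSne.choose⟩
  set n : ℕ := Fintype.card V with hn
  have hSpos : (0:ℚ) < (S.card : ℚ) := by
    exact_mod_cast Finset.card_pos.mpr hSne
  have hnpos : (0:ℚ) < (n : ℚ) := by exact_mod_cast Fintype.card_pos
  set s : T → ℕ := fun θ => (S.filter fun i => type i = θ).card with hs
  set t : T → ℕ := fun θ => (univ.filter fun i => type i = θ).card with ht
  have hutil : ∀ (i : V) (A : Finset V),
      util (bmGraph type) i A
        = ((A.card - (A.filter fun k => type k = type i).card : ℕ) : ℚ) / A.card := by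
    intro i A
    unfold util
    congr 2
    have h1 : (A.filter fun k => (bmGraph type).Adj i k)
        = A.filter fun k => ¬ (type k = type i) := by
      apply Finset.filter_congr
      intro x hx
      simp [bmGraph, ne_comm, eq_comm]
    rw [h1]
    have := Finset.card_filter_add_card_filter_not
      (s := A) (p := fun k => type k = type i)
    omega
  -- per-player inequality, stated multiplicatively
  have key : ∀ i ∈ S, util (bmGraph type) i univ ≤ util (bmGraph type) i S →
      (s (type i) : ℚ) * n ≤ (t (type i) : ℚ) * S.card := by
    intro i hi h
    rw [hutil, hutil] at h
    have hts : t (type i) ≤ n := by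
      simpa [ht, hn] using Finset.card_filter_le univ (fun k => type k = type i)
    have hss : s (type i) ≤ S.card := Finset.card_filter_le _ _
    have h : ((n - t (type i) : ℕ) : ℚ) / n ≤ ((S.card - s (type i) : ℕ) : ℚ) / S.card := h
    rw [Nat.cast_sub hts, Nat.cast_sub hss] at h
    rw [div_le_div_iff₀ hnpos hSpos] at h
    push_cast at h ⊢
    nlinarith
  have keylt : (s (type j) : ℚ) * n < (t (type j) : ℚ) * S.card := by
    have h := hstrict
    rw [hutil, hutil] at h
    have hts : t (type j) ≤ n := by
      simpa [ht, hn] using Finset.card_filter_le univ (fun k => type k = type j)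
    have hss : s (type j) ≤ S.card := Finset.card_filter_le _ _
    have h : ((n - t (type j) : ℕ) : ℚ) / n < ((S.card - s (type j) : ℕ) : ℚ) / S.card := h
    rw [Nat.cast_sub hts, Nat.cast_sub hss] at h
    rw [div_lt_div_iff₀ hnpos hSpos] at h
    push_cast at h ⊢
    nlinarith
  -- sum over the types present in S
  have hsum_s : ∑ θ ∈ S.image type, s θ = S.card := by
    exact (Finset.card_eq_sum_card_fiberwise (fun x hx => Finset.mem_image_of_mem type hx)).symm
  have hsum_t : ∑ θ ∈ S.image type, t θ ≤ n := by
    calc ∑ θ ∈ S.image type, t θ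
        = ((S.image type).biUnion fun θ => univ.filter fun i => type i = θ).card := by
          rw [Finset.card_biUnion]
          intro a _ b _ hab
          apply Finset.disjoint_left.mpr
          intro x hxa hxb
          simp only [Finset.mem_filter] at hxa hxb
          exact hab (hxa.2.symm.trans hxb.2)
      _ ≤ univ.card := Finset.card_le_card (Finset.subset_univ _)
      _ = n := rfl
  -- combine
  have hlt : (∑ θ ∈ S.image type, (s θ : ℚ) * n) < ∑ θ ∈ S.image type, (t θ : ℚ) * S.card := by
    apply Finset.sum_lt_sum
    · intro θ hθ
      obtain ⟨i, hiS, rfl⟩ := Finset.mem_image.mp hθ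
      exact key i hiS (hweak i hiS)
    · exact ⟨type j, Finset.mem_image_of_mem type hjS, keylt⟩
  rw [← Finset.sum_mul, ← Finset.sum_mul] at hlt
  have h1 : (∑ θ ∈ S.image type, (s θ : ℚ)) = S.card := by exact_mod_cast congrArg (Nat.cast (R := ℚ)) hsum_s
  have h2 : (∑ θ ∈ S.image type, (t θ : ℚ)) ≤ n := by exact_mod_cast hsum_t
  rw [h1] at hlt
  nlinarith
end

section
/- Let (N, ≿) be a Bakers and Millers game with types θ_1, …, θ_t and let π = {S_1, …, S_m} be a partition of N. Then π is in the strict core if and only if for every type θ ∈ {θ_1, …, θ_t} and all blocks S, S' ∈ π one has |S ∩ θ|/|S| = |S' ∩ θ|/|S'|. -/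
open Finset
open scoped Classical

variable {V : Type*} [Fintype V] [DecidableEq V]

set_option linter.unusedSectionVars false

noncomputable def bmRatio {T : Type*} (type : V → T) (B : Finset V) (t : T) : ℚ :=
  ((B.filter fun x => type x = t).card : ℚ) / (B.card : ℚ)

lemma bmRatio_nonneg {T : Type*} (type : V → T) (B : Finset V) (t : T) :
    0 ≤ bmRatio type B t := by
  unfold bmRatio; positivity

lemma exists_of_bmRatio_pos {T : Type*} (type : V → T) (B : Finset V) (t : T)
    (h : 0 < bmRatio type B t) : ∃ x ∈ B, type x = t := by
  by_contra hcon
  push_neg at hcon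
  have : (B.filter fun x => type x = t) = ∅ := filter_eq_empty_iff.mpr hcon
  rw [bmRatio, this] at h
  simp at h

lemma util_eq_one_sub {T : Type*} (type : V → T) (i : V) (X : Finset V) (hX : X.Nonempty) :
    util (bmGraph type) i X = 1 - bmRatio type X (type i) := by
  have hc : (0:ℚ) < (X.card : ℚ) := by exact_mod_cast card_pos.mpr hX
  have h1 : (X.filter fun j => (bmGraph type).Adj i j) = X.filter fun x => ¬ type x = type i := by
    apply filter_congr
    intro x _
    constructor
    · exact fun h he => (show type i ≠ type x from h) (he.symm)
    · exact fun h => show type i ≠ type x from fun he => h (he.symm)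
  have h2 : (X.filter fun x => type x = type i).card
      + (X.filter fun x => ¬ type x = type i).card = X.card :=
    Finset.card_filter_add_card_filter_not _
  unfold util bmRatio
  rw [h1]
  have h3 : ((X.filter fun x => ¬ type x = type i).card : ℚ)
      = (X.card : ℚ) - ((X.filter fun x => type x = type i).card : ℚ) := by
    push_cast [← h2]
    ring
  rw [h3]
  field_simp

lemma strict_core_of_eq {T : Type*} (type : V → T) (π : PlayerPartition V)
    (hEq : ∀ (t : T) (i j : V), bmRatio type (π.part i) t = bmRatio type (π.part j) t) :
    InStrictCore (bmGraph type) π := by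
  intro S hS
  obtain ⟨hne, hweak, j₀, hj₀, hstrict⟩ := hS
  have hBne : (π.part j₀).Nonempty := ⟨j₀, π.mem_part j₀⟩
  have hScard : (0:ℚ) < (S.card:ℚ) := by exact_mod_cast card_pos.mpr hne
  have hBcard : (0:ℚ) < ((π.part j₀).card:ℚ) := by exact_mod_cast card_pos.mpr hBne
  have key : ∀ t ∈ S.image type, bmRatio type S t ≤ bmRatio type (π.part j₀) t := by
    intro t ht
    obtain ⟨i, hiS, rfl⟩ := mem_image.mp ht
    have hw := hweak i hiS
    rw [util_eq_one_sub type i _ ⟨i, π.mem_part i⟩, util_eq_one_sub type i S hne] at hw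
    have := hEq (type i) i j₀
    linarith
  have hstrict' : bmRatio type S (type j₀) < bmRatio type (π.part j₀) (type j₀) := by
    rw [util_eq_one_sub type j₀ _ ⟨j₀, π.mem_part j₀⟩, util_eq_one_sub type j₀ S hne] at hstrict
    linarith
  have hsum1 : ∑ t ∈ S.image type, bmRatio type S t = 1 := by
    unfold bmRatio
    rw [← Finset.sum_div, div_eq_one_iff_eq (ne_of_gt hScard)]
    have h := Finset.card_eq_sum_card_fiberwise (s := S) (t := S.image type) (f := type)
      (fun x hx => mem_image_of_mem type hx)
    exact_mod_cast h.symm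
  have hsum2 : ∑ t ∈ S.image type, bmRatio type (π.part j₀) t ≤ 1 := by
    unfold bmRatio
    rw [← Finset.sum_div, div_le_one hBcard]
    have hnat : ∑ t ∈ S.image type, ((π.part j₀).filter fun x => type x = t).card
        ≤ (π.part j₀).card := by
      rw [← Finset.card_biUnion]
      · exact card_le_card (biUnion_subset.mpr fun t _ => filter_subset _ _)
      · intro a _ b _ hab
        rw [Function.onFun, Finset.disjoint_left]
        intro x hx hx'
        exact hab ((mem_filter.mp hx).2.symm.trans (mem_filter.mp hx').2)
    exact_mod_cast hnat
  have := Finset.sum_lt_sum key ⟨type j₀, mem_image_of_mem type hj₀, hstrict'⟩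
  linarith

lemma not_strict_core_of_lt {T : Type*} (type : V → T) (π : PlayerPartition V)
    (h : ∃ (t : T) (i j : V), bmRatio type (π.part i) t < bmRatio type (π.part j) t) :
    ¬ InStrictCore (bmGraph type) π := by
  intro hcore
  by_cases hcase : ∃ (v : T) (i j : V),
      bmRatio type (π.part i) v < bmRatio type (π.part j) v ∧ ∃ y ∈ π.part i, type y = v
  · obtain ⟨v, i, j, hlt, y, hyC, hty⟩ := hcase
    obtain ⟨x, hxD, htx⟩ := exists_of_bmRatio_pos type (π.part j) v
      (lt_of_le_of_lt (bmRatio_nonneg _ _ _) hlt)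
    have hxC : x ∉ π.part i := by
      intro hxC
      have h1 : π.part x = π.part i := π.part_eq i x hxC
      have h2 : π.part x = π.part j := π.part_eq j x hxD
      rw [h1] at h2
      rw [h2] at hlt
      exact lt_irrefl _ hlt
    set S := insert x ((π.part i).erase y) with hSdef
    have hxE : x ∉ (π.part i).erase y := fun hx => hxC (mem_of_mem_erase hx)
    have hCpos : 0 < (π.part i).card := card_pos.mpr ⟨y, hyC⟩
    have hcardS : S.card = (π.part i).card := by
      rw [hSdef, card_insert_of_notMem hxE, card_erase_of_mem hyC]
      omega
    have hfib : ∀ w, (S.filter fun z => type z = w).card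
        = ((π.part i).filter fun z => type z = w).card := by
      intro w
      rw [hSdef, filter_insert, Finset.filter_erase]
      by_cases hw : type x = w
      · rw [if_pos hw]
        have hyfil : y ∈ (π.part i).filter fun z => type z = w :=
          mem_filter.mpr ⟨hyC, by rw [hty, ← htx, hw]⟩
        have hxnot : x ∉ ((π.part i).filter fun z => type z = w).erase y :=
          fun hh => hxC (filter_subset _ _ (mem_of_mem_erase hh))
        rw [card_insert_of_notMem hxnot, card_erase_of_mem hyfil]
        have : 0 < ((π.part i).filter fun z => type z = w).card := card_pos.mpr ⟨y, hyfil⟩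
        omega
      · rw [if_neg hw, erase_eq_of_notMem]
        intro hh
        exact hw (htx.trans ((hty.symm.trans (mem_filter.mp hh).2)))
    have hratS : ∀ w, bmRatio type S w = bmRatio type (π.part i) w := by
      intro w; unfold bmRatio; rw [hfib w, hcardS]
    have hSne : S.Nonempty := ⟨x, mem_insert_self _ _⟩
    have hCne : (π.part i).Nonempty := ⟨y, hyC⟩
    have hDne : (π.part j).Nonempty := ⟨x, hxD⟩
    refine hcore S ⟨hSne, ?_, x, mem_insert_self _ _, ?_⟩
    · intro z hz
      rcases mem_insert.mp hz with rfl | hz'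
      · have hpx : π.part z = π.part j := π.part_eq j z hxD
        rw [hpx, util_eq_one_sub type z _ hDne, util_eq_one_sub type z S hSne, hratS, htx]
        linarith
      · have hzC : z ∈ π.part i := mem_of_mem_erase hz'
        have hpz : π.part z = π.part i := π.part_eq i z hzC
        rw [hpz, util_eq_one_sub type z _ hCne, util_eq_one_sub type z S hSne, hratS]
    · have hpx : π.part x = π.part j := π.part_eq j x hxD
      rw [hpx, util_eq_one_sub type x _ hDne, util_eq_one_sub type x S hSne, hratS, htx]
      linarith
  · push_neg at hcase
    obtain ⟨t, i, j, hlt⟩ := h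
    have hCt : ((π.part i).filter fun z => type z = t) = ∅ :=
      filter_eq_empty_iff.mpr (hcase t i j hlt)
    obtain ⟨x, hxD, htx⟩ := exists_of_bmRatio_pos type (π.part j) t
      (lt_of_le_of_lt (bmRatio_nonneg _ _ _) hlt)
    have hCne : (π.part i).Nonempty := ⟨i, π.mem_part i⟩
    have hDne : (π.part j).Nonempty := ⟨x, hxD⟩
    have hdisj : Disjoint (π.part i) (π.part j) := by
      rw [Finset.disjoint_left]
      intro z hzC hzD
      have h1 : π.part z = π.part i := π.part_eq i z hzC
      have h2 : π.part z = π.part j := π.part_eq j z hzD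
      rw [h1] at h2
      rw [h2] at hlt
      exact lt_irrefl _ hlt
    set S := π.part i ∪ π.part j with hSdef
    have hSne : S.Nonempty := ⟨x, mem_union_right _ hxD⟩
    have hCpos : (0:ℚ) < ((π.part i).card : ℚ) := by exact_mod_cast card_pos.mpr hCne
    have hDpos : (0:ℚ) < ((π.part j).card : ℚ) := by exact_mod_cast card_pos.mpr hDne
    have hcardS : (S.card : ℚ) = ((π.part i).card : ℚ) + ((π.part j).card : ℚ) := by
      rw [hSdef, card_union_of_disjoint hdisj]
      push_cast
      ring
    have hfib : ∀ w, ((S.filter fun z => type z = w).card : ℚ)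
        = (((π.part i).filter fun z => type z = w).card : ℚ)
          + (((π.part j).filter fun z => type z = w).card : ℚ) := by
      intro w
      rw [hSdef, filter_union, card_union_of_disjoint (disjoint_filter_filter hdisj)]
      push_cast
      ring
    have hmedC : ∀ w, bmRatio type (π.part j) w ≤ bmRatio type (π.part i) w →
        bmRatio type S w ≤ bmRatio type (π.part i) w := by
      intro w hw
      unfold bmRatio at hw ⊢
      rw [hfib w, hcardS]
      rw [div_le_div_iff₀ hDpos hCpos] at hw
      rw [div_le_div_iff₀ (by linarith) hCpos]
      nlinarith
    have hmedD : ∀ w, bmRatio type (π.part i) w ≤ bmRatio type (π.part j) w →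
        bmRatio type S w ≤ bmRatio type (π.part j) w := by
      intro w hw
      unfold bmRatio at hw ⊢
      rw [hfib w, hcardS]
      rw [div_le_div_iff₀ hCpos hDpos] at hw
      rw [div_le_div_iff₀ (by linarith) hDpos]
      nlinarith
    refine hcore S ⟨hSne, ?_, x, mem_union_right _ hxD, ?_⟩
    · intro z hz
      rcases mem_union.mp hz with hzC | hzD
      · have hpz : π.part z = π.part i := π.part_eq i z hzC
        rw [hpz, util_eq_one_sub type z _ hCne, util_eq_one_sub type z S hSne]
        have : bmRatio type (π.part j) (type z) ≤ bmRatio type (π.part i) (type z) := by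
          by_contra hcon
          push_neg at hcon
          exact hcase (type z) i j hcon z hzC rfl
        have := hmedC (type z) this
        linarith
      · have hpz : π.part z = π.part j := π.part_eq j z hzD
        rw [hpz, util_eq_one_sub type z _ hDne, util_eq_one_sub type z S hSne]
        have : bmRatio type (π.part i) (type z) ≤ bmRatio type (π.part j) (type z) := by
          by_contra hcon
          push_neg at hcon
          exact hcase (type z) j i hcon z hzD rfl
        have := hmedD (type z) this
        linarith
    · have hpx : π.part x = π.part j := π.part_eq j x hxD
      rw [hpx, util_eq_one_sub type x _ hDne, util_eq_one_sub type x S hSne, htx]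
      have hSt : bmRatio type S t < bmRatio type (π.part j) t := by
        unfold bmRatio
        rw [hfib t, hcardS, hCt]
        simp only [Finset.card_empty, Nat.cast_zero, zero_add]
        have hnum : (0:ℚ) < (((π.part j).filter fun z => type z = t).card : ℚ) := by
          exact_mod_cast card_pos.mpr ⟨x, mem_filter.mpr ⟨hxD, htx⟩⟩
        apply div_lt_div_of_pos_left hnum hDpos
        linarith
      linarith

/-- A partition `π` of a Bakers and Millers game is in the strict core iff for
every type `t` and any two blocks `S`, `S'` of `π` one has
`|S ∩ θ_t| / |S| = |S' ∩ θ_t| / |S'|`. -/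
theorem stmt_7 {T : Type*} (type : V → T) (htypes : Function.Surjective type)
    (π : PlayerPartition V) :
    InStrictCore (bmGraph type) π ↔
      ∀ (t : T) (i j : V),
        (((π.part i).filter fun x => type x = t).card : ℚ) / ((π.part i).card : ℚ) =
          (((π.part j).filter fun x => type x = t).card : ℚ) / ((π.part j).card : ℚ) := by
  constructor
  · intro hcore t i j
    by_contra hne
    have hne' : bmRatio type (π.part i) t ≠ bmRatio type (π.part j) t := hne
    rcases lt_or_gt_of_ne hne' with hlt | hgt
    · exact not_strict_core_of_lt type π ⟨t, i, j, hlt⟩ hcore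
    · exact not_strict_core_of_lt type π ⟨t, j, i, hgt⟩ hcore
  · intro hEq
    exact strict_core_of_eq type π hEq
end

section
/- Let G = (V, E) be a finite simple bipartite graph admitting a perfect matching M. Then the partition of V into the |V|/2 pairs of M is in the core of the associated simple symmetric fractional hedonic game; in particular, the core is non-empty. -/
open Finset
open scoped Classical

variable {V : Type*} [Fintype V] [DecidableEq V]

/-- Let `G` be a finite simple bipartite graph (with bipartition `A`, `Aᶜ`) that
admits a perfect matching, given as an involution `m` matching every vertex `i` to
an adjacent vertex `m i`. Then the partition of the vertices into the matched
pairs `{i, m i}` is in the core; in particular, the core is non-empty. -/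
theorem stmt_14 (G : SimpleGraph V) (A : Finset V)
    (hA : ∀ i ∈ A, ∀ j ∈ A, ¬ G.Adj i j)
    (hA' : ∀ i ∉ A, ∀ j ∉ A, ¬ G.Adj i j)
    (m : V → V) (hadj : ∀ i, G.Adj i (m i)) (hinv : ∀ i, m (m i) = i) :
    InCore G
      ⟨fun i => {i, m i},
        fun i => Finset.mem_insert_self i _,
        by
          intro i j hj
          rcases Finset.mem_insert.mp hj with h | h
          · subst h; rfl
          · rw [Finset.mem_singleton] at h
            subst h
            show ({m i, m (m i)} : Finset V) = {i, m i}
            rw [hinv i, Finset.pair_comm]⟩ := by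

  intro S hS
  obtain ⟨hne, hblock⟩ := hS
  have hutil : ∀ i : V, util G i ({i, m i} : Finset V) = 1/2 := by
    intro i
    have hne2 : i ≠ m i := (hadj i).ne
    have h1 : ({i, m i} : Finset V).filter (fun j => G.Adj i j) = {m i} := by
      ext j
      simp only [Finset.mem_filter, Finset.mem_insert, Finset.mem_singleton]
      constructor
      · rintro ⟨h | h, hadj'⟩
        · exact absurd (h ▸ hadj') (G.irrefl)
        · exact h
      · rintro rfl; exact ⟨Or.inr rfl, hadj i⟩
    have h2 : ({i, m i} : Finset V).card = 2 := by
      rw [Finset.card_insert_of_notMem (by simpa using hne2), Finset.card_singleton]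
    rw [util, h1, h2, Finset.card_singleton]
    norm_num
  have hc : 0 < S.card := hne.card_pos
  have hcQ : (0:ℚ) < (S.card : ℚ) := by exact_mod_cast hc
  have key : ∀ i ∈ S, (S.card : ℚ) < 2 * ((S.filter fun j => G.Adj i j).card : ℚ) := by
    intro i hi
    have h : util G i ({i, m i} : Finset V) < util G i S := hblock i hi
    rw [hutil i, util, div_lt_div_iff₀ (by norm_num) hcQ] at h
    linarith
  have hsum : (S.card : ℚ) * S.card <
      2 * ∑ i ∈ S, ((S.filter fun j => G.Adj i j).card : ℚ) := by
    have := Finset.sum_lt_sum_of_nonempty hne key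
    rw [Finset.sum_const, nsmul_eq_mul] at this
    rwa [← Finset.mul_sum] at this
  set a : ℕ := (S.filter (fun i => i ∈ A)).card with ha
  set b : ℕ := (S.filter (fun i => i ∉ A)).card with hb
  have hab : a + b = S.card := Finset.card_filter_add_card_filter_not _
  have hbound : ∑ i ∈ S, ((S.filter fun j => G.Adj i j).card : ℚ) ≤ (a:ℚ)*b + (b:ℚ)*a := by
    rw [← Finset.sum_filter_add_sum_filter_not S (fun i => i ∈ A)]
    have h1 : ∑ i ∈ S.filter (fun i => i ∈ A), ((S.filter fun j => G.Adj i j).card : ℚ)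
        ≤ (a:ℚ)*b := by
      calc ∑ i ∈ S.filter (fun i => i ∈ A), ((S.filter fun j => G.Adj i j).card : ℚ)
          ≤ ∑ i ∈ S.filter (fun i => i ∈ A), (b:ℚ) := by
            apply Finset.sum_le_sum
            intro i hi
            rw [Finset.mem_filter] at hi
            have hsub : S.filter (fun j => G.Adj i j) ⊆ S.filter (fun j => j ∉ A) := by
              intro j hj
              rw [Finset.mem_filter] at hj ⊢
              refine ⟨hj.1, fun hjA => hA i hi.2 j hjA hj.2⟩
            exact_mod_cast Nat.cast_le.mpr (Finset.card_le_card hsub)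
        _ = (a:ℚ)*b := by rw [Finset.sum_const, nsmul_eq_mul]
    have h2 : ∑ i ∈ S.filter (fun i => i ∉ A), ((S.filter fun j => G.Adj i j).card : ℚ)
        ≤ (b:ℚ)*a := by
      calc ∑ i ∈ S.filter (fun i => i ∉ A), ((S.filter fun j => G.Adj i j).card : ℚ)
          ≤ ∑ i ∈ S.filter (fun i => i ∉ A), (a:ℚ) := by
            apply Finset.sum_le_sum
            intro i hi
            rw [Finset.mem_filter] at hi
            have hsub : S.filter (fun j => G.Adj i j) ⊆ S.filter (fun j => j ∈ A) := by
              intro j hj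
              rw [Finset.mem_filter] at hj ⊢
              refine ⟨hj.1, by_contra fun hjA => hA' i hi.2 j hjA hj.2⟩
            exact_mod_cast Nat.cast_le.mpr (Finset.card_le_card hsub)
        _ = (b:ℚ)*a := by rw [Finset.sum_const, nsmul_eq_mul]
    linarith
  have habQ : (a:ℚ) + b = (S.card : ℚ) := by exact_mod_cast hab
  nlinarith [sq_nonneg ((a:ℚ) - b)]
end

section
/- For every finite simple bipartite graph that is k-regular for some k ≥ 1, the core of the associated simple symmetric fractional hedonic game is non-empty. -/
open Finset
open scoped Classical

variable {V : Type*} [Fintype V] [DecidableEq V]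

set_option linter.unusedSectionVars false

/-- Double counting edges between two finsets. -/
lemma doubleCount (G : SimpleGraph V) (P Q : Finset V) :
    (∑ i ∈ P, (Q.filter fun j => G.Adj i j).card)
      = ∑ j ∈ Q, (P.filter fun i => G.Adj j i).card := by
  classical
  simp only [Finset.card_filter]
  rw [Finset.sum_comm]
  refine Finset.sum_congr rfl fun j hj => Finset.sum_congr rfl fun i hi => ?_
  exact if_congr (G.adj_comm i j) rfl rfl

/-- A k-regular bipartite graph has a perfect matching, as an involution. -/
lemma exists_matching (G : SimpleGraph V) (A : Finset V)
    (hA : ∀ i ∈ A, ∀ j ∈ A, ¬ G.Adj i j)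
    (hA' : ∀ i ∉ A, ∀ j ∉ A, ¬ G.Adj i j)
    (k : ℕ) (hk : 1 ≤ k)
    (hreg : ∀ v : V, (univ.filter fun w => G.Adj v w).card = k) :
    ∃ m : V → V, Function.Involutive m ∧ ∀ v, G.Adj v (m v) := by
  classical
  have hNA : ∀ v ∈ A, ∀ w, G.Adj v w → w ∉ A := fun v hv w hw hwA => hA v hv w hwA hw
  have hNB : ∀ v, v ∉ A → ∀ w, G.Adj v w → w ∈ A := by
    intro v hv w hw
    by_contra hwA
    exact hA' v hv w hwA hw
  -- Hall's condition
  have hall : ∀ s : Finset {x // x ∈ A},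
      s.card ≤ (s.biUnion fun a => univ.filter fun w => G.Adj (↑a) w).card := by
    intro s
    set T := s.biUnion fun a => univ.filter fun w => G.Adj (↑a) w with hT
    set P : Finset V := s.image Subtype.val with hP
    have hPcard : P.card = s.card := Finset.card_image_of_injective s Subtype.coe_injective
    have h1 : ∀ i ∈ P, (univ.filter fun w => G.Adj i w) = T.filter fun w => G.Adj i w := by
      intro i hi
      obtain ⟨a, ha, rfl⟩ := Finset.mem_image.mp hi
      ext w
      simp only [mem_filter, mem_univ, true_and, hT, mem_biUnion]
      exact ⟨fun hw => ⟨⟨a, ha, hw⟩, hw⟩, fun hw => hw.2⟩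
    have h2 : (∑ i ∈ P, ((T.filter fun w => G.Adj i w)).card) = k * s.card := by
      calc (∑ i ∈ P, ((T.filter fun w => G.Adj i w)).card)
          = ∑ i ∈ P, ((univ.filter fun w => G.Adj i w)).card :=
            Finset.sum_congr rfl (fun i hi => by rw [h1 i hi])
        _ = ∑ _i ∈ P, k := Finset.sum_congr rfl (fun i _ => hreg i)
        _ = k * s.card := by rw [Finset.sum_const, smul_eq_mul, mul_comm, hPcard]
    have h3 : (∑ i ∈ P, ((T.filter fun w => G.Adj i w)).card)
        = ∑ w ∈ T, (P.filter fun i => G.Adj w i).card := doubleCount G P T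
    have h4 : ∀ w ∈ T, (P.filter fun i => G.Adj w i).card ≤ k := by
      intro w hw
      rw [← hreg w]
      exact Finset.card_le_card (fun i hi => by
        simp only [mem_filter, mem_univ, true_and] at hi ⊢; exact hi.2)
    have h5 : k * s.card ≤ k * T.card := by
      rw [← h2, h3]
      calc ∑ w ∈ T, (P.filter fun i => G.Adj w i).card ≤ ∑ _w ∈ T, k :=
            Finset.sum_le_sum h4
        _ = k * T.card := by rw [Finset.sum_const, smul_eq_mul, mul_comm]
    exact Nat.le_of_mul_le_mul_left h5 hk
  obtain ⟨f, hfinj, hfmem⟩ :=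
    (Finset.all_card_le_biUnion_card_iff_exists_injective
      (fun a : {x // x ∈ A} => univ.filter fun w => G.Adj (↑a) w)).mp hall
  have hfadj : ∀ a : {x // x ∈ A}, G.Adj (↑a) (f a) := by
    intro a
    have := hfmem a
    simp only [mem_filter, mem_univ, true_and] at this
    exact this
  have hfB : ∀ a : {x // x ∈ A}, f a ∉ A := fun a => hNA _ a.2 _ (hfadj a)
  -- |A| = |Aᶜ|
  have hcardeq : A.card = Aᶜ.card := by
    have e1 : ∀ v ∈ A, (univ.filter fun w => G.Adj v w) = Aᶜ.filter fun w => G.Adj v w := by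
      intro v hv
      ext w
      simp only [mem_filter, mem_univ, true_and, mem_compl]
      exact ⟨fun hw => ⟨hNA v hv w hw, hw⟩, fun hw => hw.2⟩
    have e2 : ∀ v ∈ Aᶜ, (univ.filter fun w => G.Adj v w) = A.filter fun w => G.Adj v w := by
      intro v hv
      rw [mem_compl] at hv
      ext w
      simp only [mem_filter, mem_univ, true_and]
      exact ⟨fun hw => ⟨hNB v hv w hw, hw⟩, fun hw => hw.2⟩
    have c1 : (∑ i ∈ A, ((Aᶜ.filter fun w => G.Adj i w)).card) = k * A.card := by
      calc (∑ i ∈ A, ((Aᶜ.filter fun w => G.Adj i w)).card)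
          = ∑ i ∈ A, ((univ.filter fun w => G.Adj i w)).card :=
            Finset.sum_congr rfl (fun i hi => by rw [e1 i hi])
        _ = ∑ _i ∈ A, k := Finset.sum_congr rfl (fun i _ => hreg i)
        _ = k * A.card := by rw [Finset.sum_const, smul_eq_mul, mul_comm]
    have c2 : (∑ j ∈ Aᶜ, ((A.filter fun w => G.Adj j w)).card) = k * Aᶜ.card := by
      calc (∑ j ∈ Aᶜ, ((A.filter fun w => G.Adj j w)).card)
          = ∑ j ∈ Aᶜ, ((univ.filter fun w => G.Adj j w)).card :=
            Finset.sum_congr rfl (fun j hj => by rw [e2 j hj])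
        _ = ∑ _j ∈ Aᶜ, k := Finset.sum_congr rfl (fun j _ => hreg j)
        _ = k * Aᶜ.card := by rw [Finset.sum_const, smul_eq_mul, mul_comm]
    have hd := doubleCount G A Aᶜ
    rw [c1, c2] at hd
    exact Nat.eq_of_mul_eq_mul_left hk hd
  -- f's image is exactly Aᶜ
  have hIm : (univ.image f : Finset V) = Aᶜ := by
    apply Finset.eq_of_subset_of_card_le
    · intro v hv
      obtain ⟨a, _, rfl⟩ := Finset.mem_image.mp hv
      exact mem_compl.mpr (hfB a)
    · rw [Finset.card_image_of_injective _ hfinj, ← hcardeq]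
      simp [Finset.card_univ]
  have hsurj : ∀ v : V, v ∉ A → ∃ a : {x // x ∈ A}, f a = v := by
    intro v hv
    have : v ∈ (univ.image f : Finset V) := hIm ▸ mem_compl.mpr hv
    obtain ⟨a, _, ha⟩ := Finset.mem_image.mp this
    exact ⟨a, ha⟩
  set m : V → V := fun v => if h : v ∈ A then f ⟨v, h⟩ else ↑(hsurj v h).choose with hm
  have hmadj : ∀ v, G.Adj v (m v) := by
    intro v
    by_cases h : v ∈ A
    · simp only [hm, dif_pos h]
      exact hfadj ⟨v, h⟩
    · simp only [hm, dif_neg h]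
      have hc := (hsurj v h).choose_spec
      have := hfadj (hsurj v h).choose
      rw [hc] at this
      exact this.symm
  refine ⟨m, ?_, hmadj⟩
  intro v
  by_cases h : v ∈ A
  · have hmv : m v = f ⟨v, h⟩ := by simp only [hm, dif_pos h]
    have hB : m v ∉ A := hmv ▸ hfB ⟨v, h⟩
    have hmm : m (m v) = ↑(hsurj (m v) hB).choose := by exact dif_neg hB
    rw [hmm]
    have hc := (hsurj (m v) hB).choose_spec
    exact congrArg Subtype.val (hfinj (hc.trans hmv))
  · have hmv : m v = ↑(hsurj v h).choose := by simp only [hm, dif_neg h]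
    have hInA : m v ∈ A := hmv ▸ (hsurj v h).choose.2
    have hmm : m (m v) = f ⟨m v, hInA⟩ := by exact dif_pos hInA
    rw [hmm]
    have h4 : (⟨m v, hInA⟩ : {x // x ∈ A}) = (hsurj v h).choose := Subtype.ext hmv
    rw [h4, (hsurj v h).choose_spec]

/-- For every finite simple bipartite graph (with bipartition `A`, `Aᶜ`) that is
`k`-regular for some `k ≥ 1`, the core of the associated simple symmetric
fractional hedonic game is non-empty. -/
theorem stmt_16 (G : SimpleGraph V) (A : Finset V)
    (hA : ∀ i ∈ A, ∀ j ∈ A, ¬ G.Adj i j)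
    (hA' : ∀ i ∉ A, ∀ j ∉ A, ¬ G.Adj i j)
    (k : ℕ) (hk : 1 ≤ k)
    (hreg : ∀ v : V, (univ.filter fun w => G.Adj v w).card = k) :
    ∃ π : PlayerPartition V, InCore G π := by
  classical
  obtain ⟨m, hinv, hadj⟩ := exists_matching G A hA hA' k hk hreg
  have hm_ne : ∀ v, m v ≠ v := by
    intro v h
    exact G.irrefl (h ▸ hadj v)
  refine ⟨⟨fun i => {i, m i}, fun i => mem_insert_self i _, ?_⟩, ?_⟩
  · intro i j hj
    rcases Finset.mem_insert.mp hj with rfl | hj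
    · rfl
    · rw [Finset.mem_singleton.mp hj]
      show ({m i, m (m i)} : Finset V) = {i, m i}
      rw [hinv i]
      exact Finset.pair_comm (m i) i
  · intro S hS
    obtain ⟨hSne, hblock⟩ := hS
    -- the utility in the pair partition is 1/2
    have hhalf : ∀ i : V, util G i {i, m i} = 1/2 := by
      intro i
      have hc : ({i, m i} : Finset V).card = 2 := Finset.card_pair (hm_ne i).symm
      have hf : ({i, m i} : Finset V).filter (fun j => G.Adj i j) = {m i} := by
        ext j
        simp only [mem_filter, mem_insert, mem_singleton]
        constructor
        · rintro ⟨rfl | rfl, hadj'⟩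
          · exact absurd hadj' (G.irrefl)
          · rfl
        · rintro rfl
          exact ⟨Or.inr rfl, hadj i⟩
      rw [util, hf, hc]
      norm_num
    have hn : 1 ≤ S.card := Finset.card_pos.mpr hSne
    -- every member of the blocking coalition gets more than half
    have key : ∀ i ∈ S, S.card + 1 ≤ 2 * (S.filter fun j => G.Adj i j).card := by
      intro i hi
      have h := hblock i hi
      rw [hhalf i, util] at h
      have hnq : (0:ℚ) < (S.card : ℚ) := by exact_mod_cast hn
      rw [div_lt_div_iff₀ (by norm_num) hnq] at h
      have h2 : (S.card : ℚ) < ((2 * (S.filter fun j => G.Adj i j).card : ℕ) : ℚ) := by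
        push_cast; linarith
      have := Nat.cast_lt.mp h2
      omega
    set SA := S.filter (fun v => v ∈ A) with hSA
    set SB := S.filter (fun v => v ∉ A) with hSB
    have hab : SA.card + SB.card = S.card := Finset.card_filter_add_card_filter_not _
    -- for i in SA, all its neighbors in S lie in SB
    have hfa : ∀ i ∈ SA, (S.filter fun j => G.Adj i j) = SB.filter fun j => G.Adj i j := by
      intro i hi
      rw [hSA, mem_filter] at hi
      ext j
      simp only [hSB, mem_filter]
      constructor
      · intro ⟨hjS, hadj'⟩
        exact ⟨⟨hjS, fun hjA => hA i hi.2 j hjA hadj'⟩, hadj'⟩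
      · exact fun h => ⟨h.1.1, h.2⟩
    have hfb : ∀ j ∈ SB, (S.filter fun i => G.Adj j i) = SA.filter fun i => G.Adj j i := by
      intro j hj
      rw [hSB, mem_filter] at hj
      ext i
      simp only [hSA, mem_filter]
      constructor
      · intro ⟨hiS, hadj'⟩
        refine ⟨⟨hiS, ?_⟩, hadj'⟩
        by_contra hiA
        exact hA' j hj.2 i hiA hadj'
      · exact fun h => ⟨h.1.1, h.2⟩
    set E := ∑ i ∈ SA, (SB.filter fun j => G.Adj i j).card with hE
    have sumA : SA.card * (S.card + 1) ≤ 2 * E := by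
      calc SA.card * (S.card + 1) = ∑ _i ∈ SA, (S.card + 1) := by
            rw [Finset.sum_const, smul_eq_mul]
        _ ≤ ∑ i ∈ SA, 2 * (SB.filter fun j => G.Adj i j).card := by
            refine Finset.sum_le_sum fun i hi => ?_
            rw [← hfa i hi]
            exact key i (Finset.mem_of_mem_filter i hi)
        _ = 2 * E := by rw [hE, Finset.mul_sum]
    have hE' : E = ∑ j ∈ SB, (SA.filter fun i => G.Adj j i).card := doubleCount G SA SB
    have sumB : SB.card * (S.card + 1) ≤ 2 * E := by
      calc SB.card * (S.card + 1) = ∑ _j ∈ SB, (S.card + 1) := by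
            rw [Finset.sum_const, smul_eq_mul]
        _ ≤ ∑ j ∈ SB, 2 * (SA.filter fun i => G.Adj j i).card := by
            refine Finset.sum_le_sum fun j hj => ?_
            rw [← hfb j hj]
            exact key j (Finset.mem_of_mem_filter j hj)
        _ = 2 * E := by rw [hE', Finset.mul_sum]
    have hEle : E ≤ SA.card * SB.card := by
      calc E ≤ ∑ _i ∈ SA, SB.card :=
            Finset.sum_le_sum fun i _ => Finset.card_le_card (Finset.filter_subset _ _)
        _ = SA.card * SB.card := by rw [Finset.sum_const, smul_eq_mul]
    -- putting it together : n(n+1) ≤ 4ab ≤ (a+b)² = n², contradiction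
    have hZ : False := by
      have h1 : (SA.card : ℤ) * (S.card + 1) ≤ 2 * E := by exact_mod_cast sumA
      have h2 : (SB.card : ℤ) * (S.card + 1) ≤ 2 * E := by exact_mod_cast sumB
      have h3 : (E : ℤ) ≤ SA.card * SB.card := by exact_mod_cast hEle
      have h4 : (SA.card : ℤ) + SB.card = S.card := by exact_mod_cast hab
      have h5 : (1 : ℤ) ≤ S.card := by exact_mod_cast hn
      nlinarith [sq_nonneg ((SA.card : ℤ) - SB.card)]
    exact hZ
end
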